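/- Let m_0, p be positive integers and let G be a graph such that G →v (a_1,...,a_s) for every tuple of positive integers a_1,...,a_s with Σ(a_i−1)+1 = m_0 and max a_i ≤ p (written G →v [m_0]^p). Then for every m ≥ m_0, the join K_{m−m_0} + G satisfies K_{m−m_0} + G →v [m]^p. -/

import Mathlib

open SimpleGraph

/-- `VArrows G a` : for every coloring of the vertices of `G` with `a.length` colors,
some color class `i` contains a clique of size `a.get i`. -/
def VArrows {V : Type} [Fintype V] (G : SimpleGraph V) (a : List ℕ) : Prop :=
  ∀ c : V → Fin a.length, ∃ i : Fin a.length, ∃ S : Finset V,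
    (∀ v ∈ S, c v = i) ∧ G.IsNClique (a.get i) S

/-- `G →v [m]^p` : `G` arrows every tuple of positive integers with
`Σ(a_i - 1) + 1 = m` and all entries at most `p`. -/
def VArrowsUni (m p : ℕ) {V : Type} [Fintype V] (G : SimpleGraph V) : Prop :=
  ∀ a : List ℕ, a ≠ [] → (∀ x ∈ a, 0 < x) → (a.map (· - 1)).sum + 1 = m →
    (∀ x ∈ a, x ≤ p) → VArrows G a

/-- The join of two graphs: all cross edges are present. -/
def joinG {V W : Type} (G : SimpleGraph V) (H : SimpleGraph W) : SimpleGraph (V ⊕ W) where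
  Adj x y := match x, y with
    | .inl a, .inl b => G.Adj a b
    | .inr a, .inr b => H.Adj a b
    | .inl _, .inr _ => True
    | .inr _, .inl _ => True
  symm := by refine ⟨?_⟩; rintro (a|a) (b|b) h
             · exact h.symm
             · trivial
             · trivial
             · exact h.symm
  loopless := by refine ⟨?_⟩; rintro (a|a) h
                 · exact G.loopless.irrefl a h
                 · exact H.loopless.irrefl a h

theorem join_uni (m₀ p m : ℕ) (h₀ : 0 < m₀) (hp : 0 < p) (hm : m₀ ≤ m)
    {V : Type} [Fintype V] (G : SimpleGraph V) (hG : VArrowsUni m₀ p G) :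
    VArrowsUni m p (joinG (⊤ : SimpleGraph (Fin (m - m₀))) G) := by
  intro a hne hpos hsum hle c
  classical
  set k : Fin a.length → ℕ := fun i =>
    (Finset.univ.filter (fun x : Fin (m - m₀) => c (Sum.inl x) = i)).card with hk
  have hksum : ∑ i, k i = m - m₀ := by
    have := Finset.card_eq_sum_card_fiberwise
      (s := (Finset.univ : Finset (Fin (m - m₀)))) (t := Finset.univ)
      (f := fun x => c (Sum.inl x)) (fun x _ => Finset.mem_univ _)
    simpa [hk] using this.symm
  by_cases hcase : ∃ i, a.get i ≤ k i
  · obtain ⟨i, hi⟩ := hcase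
    obtain ⟨T, hTsub, hTcard⟩ := Finset.exists_subset_card_eq hi
    refine ⟨i, T.image Sum.inl, ?_, ?_, ?_⟩
    · intro v hv
      obtain ⟨x, hx, rfl⟩ := Finset.mem_image.mp hv
      exact (Finset.mem_filter.mp (hTsub hx)).2
    · intro u hu v hv huv
      obtain ⟨x, hx, rfl⟩ := Finset.mem_image.mp hu
      obtain ⟨y, hy, rfl⟩ := Finset.mem_image.mp hv
      have : x ≠ y := fun h => huv (by rw [h])
      simpa [joinG] using this
    · rw [Finset.card_image_of_injective _ Sum.inl_injective, hTcard]
  · push_neg at hcase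
    set b : List ℕ := List.ofFn (fun i => a.get i - k i) with hb
    have hblen : b.length = a.length := List.length_ofFn
    have hgetb : ∀ j : Fin b.length, b.get j = a.get (Fin.cast hblen j) - k (Fin.cast hblen j) := by
      intro j
      simp [hb, List.get_ofFn]
      rfl
    have hsuma : (a.map (· - 1)).sum = ∑ i : Fin a.length, (a.get i - 1) := by
      conv_lhs => rw [← List.ofFn_get a]
      rw [List.map_ofFn, List.sum_ofFn]
      rfl
    have hsumb : (b.map (· - 1)).sum = ∑ i : Fin a.length, (a.get i - k i - 1) := by
      rw [hb, List.map_ofFn, List.sum_ofFn]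
      rfl
    have hklt : ∀ i, k i ≤ a.get i - 1 := by
      intro i
      have := hcase i
      omega
    have hsum' : (b.map (· - 1)).sum + 1 = m₀ := by
      rw [hsumb]
      have h1 : ∀ i : Fin a.length, a.get i - k i - 1 = (a.get i - 1) - k i := by
        intro i; omega
      simp only [h1]
      have h3 : ∑ x : Fin a.length, ((a.get x - 1) - k x)
          = ∑ x : Fin a.length, (a.get x - 1) - ∑ x : Fin a.length, k x :=
        Finset.sum_tsub_distrib _ (fun i _ => hklt i)
      have h2 : ∑ i : Fin a.length, (a.get i - 1) = m - 1 := by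
        rw [← hsuma]; omega
      omega
    have hbarrow : VArrows G b := by
      refine hG b ?_ ?_ hsum' ?_
      · intro h
        have : a.length = 0 := by rw [← hblen, h]; rfl
        exact hne (List.length_eq_zero_iff.mp this)
      · intro x hx
        obtain ⟨i, rfl⟩ := List.mem_ofFn.mp hx
        show 0 < a.get i - k i
        have := hcase i; omega
      · intro x hx
        obtain ⟨i, rfl⟩ := List.mem_ofFn.mp hx
        exact le_trans (Nat.sub_le _ _) (hle _ (List.get_mem a i))
    obtain ⟨j, S, hSc, hSclique⟩ := hbarrow (fun v => Fin.cast hblen.symm (c (Sum.inr v)))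
    set i : Fin a.length := Fin.cast hblen j with hi
    have hci : ∀ v ∈ S, c (Sum.inr v) = i := by
      intro v hv
      have := hSc v hv
      apply Fin.ext
      have := congrArg Fin.val this
      simpa [hi] using this
    refine ⟨i, S.image Sum.inr ∪ (Finset.univ.filter
      (fun x : Fin (m - m₀) => c (Sum.inl x) = i)).image Sum.inl, ?_, ?_, ?_⟩
    · intro v hv
      rcases Finset.mem_union.mp hv with h | h
      · obtain ⟨x, hx, rfl⟩ := Finset.mem_image.mp h
        exact hci x hx
      · obtain ⟨x, hx, rfl⟩ := Finset.mem_image.mp h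
        exact (Finset.mem_filter.mp hx).2
    · intro u hu v hv huv
      rcases Finset.mem_union.mp hu with h | h <;>
        rcases Finset.mem_union.mp hv with h' | h'
      · obtain ⟨x, hx, rfl⟩ := Finset.mem_image.mp h
        obtain ⟨y, hy, rfl⟩ := Finset.mem_image.mp h'
        have hxy : x ≠ y := fun hh => huv (by rw [hh])
        have := hSclique.isClique hx hy hxy
        simpa [joinG] using this
      · obtain ⟨x, hx, rfl⟩ := Finset.mem_image.mp h
        obtain ⟨y, hy, rfl⟩ := Finset.mem_image.mp h'
        simp [joinG]
      · obtain ⟨x, hx, rfl⟩ := Finset.mem_image.mp h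
        obtain ⟨y, hy, rfl⟩ := Finset.mem_image.mp h'
        simp [joinG]
      · obtain ⟨x, hx, rfl⟩ := Finset.mem_image.mp h
        obtain ⟨y, hy, rfl⟩ := Finset.mem_image.mp h'
        have hxy : x ≠ y := fun hh => huv (by rw [hh])
        simpa [joinG] using hxy
    · rw [Finset.card_union_of_disjoint, Finset.card_image_of_injective _ Sum.inr_injective,
        Finset.card_image_of_injective _ Sum.inl_injective]
      · have hcard := hSclique.card_eq
        rw [hgetb j] at hcard
        have := hcase i
        rw [hcard]
        show a.get i - k i + k i = a.get i
        omega
      · rw [Finset.disjoint_left]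
        rintro x hx hx'
        obtain ⟨u, _, rfl⟩ := Finset.mem_image.mp hx
        obtain ⟨w, _, h⟩ := Finset.mem_image.mp hx'
        exact absurd h (by simp)
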